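/- Let ψ ∈ C²([a,b]) be a positive function with ψ'(a) = ψ'(b) = 0. Then ∫_a^b [(√ψ)'']² dx ≤ (13/8) ∫_a^b ψ [(log ψ)'']² dx. -/

import Mathlib

theorem stmt_4 (a b : ℝ) (hab : a < b) (ψ : ℝ → ℝ)
    (hψ : ContDiff ℝ 2 ψ)
    (hpos : ∀ x ∈ Set.Icc a b, 0 < ψ x)
    (hba : deriv ψ a = 0) (hbb : deriv ψ b = 0) :
    (∫ x in a..b, (deriv (deriv (fun y => Real.sqrt (ψ y))) x) ^ 2) ≤
      (13 / 8) * ∫ x in a..b, ψ x * (deriv (deriv (fun y => Real.log (ψ y))) x) ^ 2 := by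
  have hψ2 : ContDiff ℝ (1+1 : ℕ) ψ := by exact_mod_cast hψ
  set g : ℝ → ℝ := deriv ψ with hg
  set h : ℝ → ℝ := deriv g with hh
  have hψd : Differentiable ℝ ψ := hψ.differentiable (by norm_num)
  have hψc : Continuous ψ := hψ.continuous
  have hgc1 : ContDiff ℝ 1 g := (contDiff_succ_iff_deriv.mp hψ2).2.2
  have hgd : Differentiable ℝ g := hgc1.differentiable one_ne_zero
  have hgc : Continuous g := hgd.continuous
  have hhc : Continuous h := hgc1.continuous_deriv le_rfl
  set S : Set ℝ := ψ ⁻¹' Set.Ioi 0 with hSdef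
  have hSopen : IsOpen S := (isOpen_Ioi).preimage hψc
  have hsub : Set.Icc a b ⊆ S := fun x hx => hpos x hx
  have hSpos : ∀ x ∈ S, 0 < ψ x := fun x hx => hx
  have huIcc : Set.uIcc a b = Set.Icc a b := Set.uIcc_of_le hab.le
  -- first derivative formulas on S
  have hs1 : ∀ x ∈ S, HasDerivAt (fun y => Real.sqrt (ψ y)) (g x / (2 * Real.sqrt (ψ x))) x := by
    intro x hx
    have := (Real.hasDerivAt_sqrt (ne_of_gt (hSpos x hx))).comp x (hψd x).hasDerivAt
    exact this.congr_deriv (by ring)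
  have hs2 : ∀ x ∈ S, HasDerivAt (fun y => Real.log (ψ y)) (g x / ψ x) x := by
    intro x hx
    have := (Real.hasDerivAt_log (ne_of_gt (hSpos x hx))).comp x (hψd x).hasDerivAt
    exact this.congr_deriv (by ring)
  -- second derivative formulas on S
  have hd2sqrt : ∀ x ∈ S, deriv (deriv (fun y => Real.sqrt (ψ y))) x
      = (2 * h x * ψ x - g x ^ 2) / (4 * ψ x * Real.sqrt (ψ x)) := by
    intro x hx
    have heq : deriv (fun y => Real.sqrt (ψ y)) =ᶠ[nhds x] fun y => g y / (2 * Real.sqrt (ψ y)) := by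
      filter_upwards [hSopen.mem_nhds hx] with y hy
      exact (hs1 y hy).deriv
    rw [Filter.EventuallyEq.deriv_eq heq]
    have hp : 0 < ψ x := hSpos x hx
    have hs : 0 < Real.sqrt (ψ x) := Real.sqrt_pos.mpr hp
    have hden : HasDerivAt (fun y => 2 * Real.sqrt (ψ y)) (2 * (g x / (2 * Real.sqrt (ψ x)))) x :=
      (hs1 x hx).const_mul 2
    have hdiv := ((hgd x).hasDerivAt.div hden (by positivity))
    rw [show deriv (fun y => g y / (2 * Real.sqrt (ψ y))) x = _ from hdiv.deriv]
    have h2 : Real.sqrt (ψ x) * Real.sqrt (ψ x) = ψ x := Real.mul_self_sqrt hp.le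
    have h3 : Real.sqrt (ψ x) ^ 3 = ψ x * Real.sqrt (ψ x) := by rw [pow_succ, sq, h2]
    field_simp
    linear_combination 4 * g x ^ 2 * h2
  have hd2log : ∀ x ∈ S, deriv (deriv (fun y => Real.log (ψ y))) x
      = (h x * ψ x - g x ^ 2) / ψ x ^ 2 := by
    intro x hx
    have heq : deriv (fun y => Real.log (ψ y)) =ᶠ[nhds x] fun y => g y / ψ y := by
      filter_upwards [hSopen.mem_nhds hx] with y hy
      exact (hs2 y hy).deriv
    rw [Filter.EventuallyEq.deriv_eq heq]
    have hp : 0 < ψ x := hSpos x hx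
    have hdiv := ((hgd x).hasDerivAt.div (hψd x).hasDerivAt (ne_of_gt hp))
    rw [show deriv (fun y => g y / ψ y) x = _ from hdiv.deriv]
    ring
  -- the named integrands
  set F1 : ℝ → ℝ := fun x => (2 * h x * ψ x - g x ^ 2) ^ 2 / (16 * ψ x ^ 3) with hF1
  set F2 : ℝ → ℝ := fun x => ψ x * ((h x * ψ x - g x ^ 2) / ψ x ^ 2) ^ 2 with hF2
  set N : ℝ → ℝ := fun x =>
    (22 * (h x * ψ x - g x ^ 2) ^ 2 + (g x ^ 2) ^ 2 / 3) / (16 * ψ x ^ 3) with hN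
  set Gd : ℝ → ℝ := fun x => (3 * h x * g x ^ 2 * ψ x ^ 2 - 2 * g x ^ 4 * ψ x) / ψ x ^ 4 with hGd
  -- rewrite LHS integral
  have hL : (∫ x in a..b, (deriv (deriv (fun y => Real.sqrt (ψ y))) x) ^ 2)
      = ∫ x in a..b, F1 x := by
    apply intervalIntegral.integral_congr
    intro x hx
    rw [huIcc] at hx
    have hxS := hsub hx
    have hp : 0 < ψ x := hSpos _ hxS
    have hs : 0 < Real.sqrt (ψ x) := Real.sqrt_pos.mpr hp
    have h2 : Real.sqrt (ψ x) * Real.sqrt (ψ x) = ψ x := Real.mul_self_sqrt hp.le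
    show (deriv (deriv fun y => Real.sqrt (ψ y)) x) ^ 2 = F1 x
    rw [hd2sqrt x hxS]
    rw [div_pow, hF1]
    congr 1
    have : (4 * ψ x * Real.sqrt (ψ x)) ^ 2 = 16 * ψ x ^ 3 := by
      rw [mul_pow, mul_pow, Real.sq_sqrt hp.le]; ring
    rw [this]
  have hR : (∫ x in a..b, ψ x * (deriv (deriv (fun y => Real.log (ψ y))) x) ^ 2)
      = ∫ x in a..b, F2 x := by
    apply intervalIntegral.integral_congr
    intro x hx
    rw [huIcc] at hx
    show ψ x * (deriv (deriv fun y => Real.log (ψ y)) x) ^ 2 = F2 x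
    rw [hd2log x (hsub hx)]
  -- integrability
  have hne : ∀ x ∈ Set.uIcc a b, ψ x ≠ 0 := by
    intro x hx; exact ne_of_gt (hSpos _ (hsub (huIcc ▸ hx)))
  have hiF1 : IntervalIntegrable F1 MeasureTheory.volume a b := by
    apply ContinuousOn.intervalIntegrable
    exact ContinuousOn.div (by fun_prop) (by fun_prop)
      (fun x hx => by have := hne x hx; positivity)
  have hiF2 : IntervalIntegrable F2 MeasureTheory.volume a b := by
    apply ContinuousOn.intervalIntegrable
    exact ContinuousOn.mul (by fun_prop)
      ((ContinuousOn.div (by fun_prop) (by fun_prop)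
        (fun x hx => by have := hne x hx; positivity)).pow 2)
  have hiN : IntervalIntegrable N MeasureTheory.volume a b := by
    apply ContinuousOn.intervalIntegrable
    exact ContinuousOn.div (by fun_prop) (by fun_prop)
      (fun x hx => by have := hne x hx; positivity)
  have hiGd : IntervalIntegrable Gd MeasureTheory.volume a b := by
    apply ContinuousOn.intervalIntegrable
    exact ContinuousOn.div (by fun_prop) (by fun_prop)
      (fun x hx => by have := hne x hx; positivity)
  -- integration by parts : ∫ Gd = 0
  have hGmain : (∫ x in a..b, Gd x) = 0 := by
    have hG : ∀ x ∈ Set.uIcc a b, HasDerivAt (fun y => g y ^ 3 / ψ y ^ 2) (Gd x) x := by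
      intro x hx
      have hxS := hsub (huIcc ▸ hx)
      have hp : 0 < ψ x := hSpos _ hxS
      have hnum : HasDerivAt (fun y => g y ^ 3) (3 * g x ^ 2 * h x) x := by
        have := ((hgd x).hasDerivAt.pow 3)
        exact this.congr_deriv (by push_cast; ring)
      have hden : HasDerivAt (fun y => ψ y ^ 2) (2 * ψ x * g x) x := by
        have := ((hψd x).hasDerivAt.pow 2)
        exact this.congr_deriv (by push_cast; ring)
      have := hnum.div hden (by positivity)
      refine this.congr_deriv ?_
      rw [hGd]
      field_simp
      try ring
    have := intervalIntegral.integral_eq_sub_of_hasDerivAt hG hiGd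
    rw [this, hba, hbb]
    norm_num
  -- pointwise identity
  have hkey : ∀ x ∈ Set.uIcc a b, F1 x = (13/8) * F2 x - N x + (1/12) * Gd x := by
    intro x hx
    have hp : 0 < ψ x := hSpos _ (hsub (huIcc ▸ hx))
    rw [hF1, hF2, hN, hGd]
    have hne' : ψ x ≠ 0 := ne_of_gt hp
    field_simp
    ring
  -- conclude
  have hsplit : (∫ x in a..b, F1 x)
      = (13/8) * (∫ x in a..b, F2 x) - (∫ x in a..b, N x) + (1/12) * (∫ x in a..b, Gd x) := by
    rw [intervalIntegral.integral_congr hkey]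
    rw [intervalIntegral.integral_add ((hiF2.const_mul _).sub hiN) (hiGd.const_mul _),
      intervalIntegral.integral_sub (hiF2.const_mul _) hiN,
      intervalIntegral.integral_const_mul, intervalIntegral.integral_const_mul]
  have hNnonneg : 0 ≤ ∫ x in a..b, N x := by
    apply intervalIntegral.integral_nonneg hab.le
    intro u hu
    have hp : 0 < ψ u := hSpos _ (hsub hu)
    rw [hN]
    positivity
  rw [hL, hR, hsplit, hGmain]
  linarith
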